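/- The map ψ : D → B defined by x·ψ(d) = τ(x·d) for all x ∈ X, d ∈ D (under the identification of B with the adjointable left A-linear operators on X) satisfies ψ(⟨x, y⟩_D) = ⟨x, τ(y)⟩_B for all x ∈ X, y ∈ Y. -/

import Mathlib

/-- A pair `(X, Y)` implementing a strong Morita equivalence of unital inclusions
`A ⊆ C` and `B ⊆ D` of unital C*-algebras: `Y` is a `C`–`D`-equivalence bimodule and
`X` is a closed subspace of `Y` which is an `A`–`B`-equivalence bimodule with the
restricted actions and inner products. -/
structure MoritaPair
    (A : Type*) [NormedRing A] [StarRing A] [CStarRing A] [NormedAlgebra ℂ A]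
      [CompleteSpace A] [StarModule ℂ A]
    (C : Type*) [NormedRing C] [StarRing C] [CStarRing C] [NormedAlgebra ℂ C]
      [CompleteSpace C] [StarModule ℂ C]
    (B : Type*) [NormedRing B] [StarRing B] [CStarRing B] [NormedAlgebra ℂ B]
      [CompleteSpace B] [StarModule ℂ B]
    (D : Type*) [NormedRing D] [StarRing D] [CStarRing D] [NormedAlgebra ℂ D]
      [CompleteSpace D] [StarModule ℂ D]
    (X : Type*) [NormedAddCommGroup X] [NormedSpace ℂ X]
    (Y : Type*) [NormedAddCommGroup Y] [NormedSpace ℂ Y] [CompleteSpace Y] where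
  /-- the unital isometric *-embedding of `A` into `C` -/
  ιA : A →⋆ₐ[ℂ] C
  /-- the unital isometric *-embedding of `B` into `D` -/
  ιB : B →⋆ₐ[ℂ] D
  ιA_isometry : Isometry ιA
  ιB_isometry : Isometry ιB
  /-- the inclusion of the closed subspace `X` into `Y` -/
  incl : X →ₗ[ℂ] Y
  incl_norm : ∀ x, ‖incl x‖ = ‖x‖
  incl_closed : IsClosed (Set.range incl)
  /-- left action of `C` on `Y` -/
  lC : C → Y → Y
  lC_one : ∀ y, lC 1 y = y
  lC_mul : ∀ c c' y, lC (c * c') y = lC c (lC c' y)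
  lC_add_right : ∀ c y y', lC c (y + y') = lC c y + lC c y'
  lC_add_left : ∀ c c' y, lC (c + c') y = lC c y + lC c' y
  lC_smul : ∀ (z : ℂ) c y, lC (z • c) y = z • lC c y
  /-- right action of `D` on `Y` -/
  rD : Y → D → Y
  rD_one : ∀ y, rD y 1 = y
  rD_mul : ∀ y d d', rD y (d * d') = rD (rD y d) d'
  rD_add_left : ∀ y y' d, rD (y + y') d = rD y d + rD y' d
  rD_add_right : ∀ y d d', rD y (d + d') = rD y d + rD y d'
  rD_smul : ∀ (z : ℂ) y d, rD y (z • d) = z • rD y d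
  smul_assoc : ∀ c y d, rD (lC c y) d = lC c (rD y d)
  /-- the left `C`-valued inner product on `Y` -/
  innC : Y → Y → C
  innC_add_left : ∀ y y' z, innC (y + y') z = innC y z + innC y' z
  innC_star : ∀ y z, star (innC y z) = innC z y
  innC_lC : ∀ c y z, innC (lC c y) z = c * innC y z
  innC_norm : ∀ y, ‖innC y y‖ = ‖y‖ ^ 2
  /-- the right `D`-valued inner product on `Y` -/
  innD : Y → Y → D
  innD_add_right : ∀ y z z', innD y (z + z') = innD y z + innD y z'
  innD_star : ∀ y z, star (innD y z) = innD z y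
  innD_rD : ∀ y z d, innD y (rD z d) = innD y z * d
  innD_norm : ∀ y, ‖innD y y‖ = ‖y‖ ^ 2
  imprimitivity : ∀ y z w, lC (innC y z) w = rD y (innD z w)
  innC_full : (Submodule.span ℂ {c : C | ∃ y z, innC y z = c}).topologicalClosure = ⊤
  innD_full : (Submodule.span ℂ {d : D | ∃ y z, innD y z = d}).topologicalClosure = ⊤
  /-- left action of `A` on `X`, the restriction of the `C`-action -/
  lA : A → X → X
  lA_compat : ∀ a x, incl (lA a x) = lC (ιA a) (incl x)
  /-- right action of `B` on `X`, the restriction of the `D`-action -/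
  rB : X → B → X
  rB_compat : ∀ x b, incl (rB x b) = rD (incl x) (ιB b)
  /-- the left `A`-valued inner product on `X`, the restriction of `innC` -/
  innA : X → X → A
  innA_compat : ∀ x z, ιA (innA x z) = innC (incl x) (incl z)
  /-- the right `B`-valued inner product on `X`, the restriction of `innD` -/
  innB : X → X → B
  innB_compat : ∀ x z, ιB (innB x z) = innD (incl x) (incl z)
  innA_full : (Submodule.span ℂ {a : A | ∃ x z, innA x z = a}).topologicalClosure = ⊤
  innB_full : (Submodule.span ℂ {b : B | ∃ x z, innB x z = b}).topologicalClosure = ⊤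

variable {A : Type*} [NormedRing A] [StarRing A] [CStarRing A] [NormedAlgebra ℂ A]
  [CompleteSpace A] [StarModule ℂ A]
variable {C : Type*} [NormedRing C] [StarRing C] [CStarRing C] [NormedAlgebra ℂ C]
  [CompleteSpace C] [StarModule ℂ C]
variable {B : Type*} [NormedRing B] [StarRing B] [CStarRing B] [NormedAlgebra ℂ B]
  [CompleteSpace B] [StarModule ℂ B]
variable {D : Type*} [NormedRing D] [StarRing D] [CStarRing D] [NormedAlgebra ℂ D]
  [CompleteSpace D] [StarModule ℂ D]
variable {X : Type*} [NormedAddCommGroup X] [NormedSpace ℂ X]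
variable {Y : Type*} [NormedAddCommGroup Y] [NormedSpace ℂ Y] [CompleteSpace Y]

/-- the map `ψ : D → B` defined by `x·ψ(d) = τ(x·d)` satisfies
`ψ(⟨x, y⟩_D) = ⟨x, τ(y)⟩_B` for all `x ∈ X`, `y ∈ Y`. -/
theorem stmt5 (M : MoritaPair A C B D X Y) (φ : C →L[ℂ] A)
    (hφ : ∀ (a : A) (c : C), φ (M.ιA a * c) = a * φ c ∧ φ (c * M.ιA a) = φ c * a)
    (τ : Y →ₗ[ℂ] X)
    (hτ : ∀ (y : Y) (x : X), M.innA (τ y) x = φ (M.innC y (M.incl x)))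
    (ψ : D →ₗ[ℂ] B)
    (hψ : ∀ (x : X) (d : D), M.rB x (ψ d) = τ (M.rD (M.incl x) d)) :
    ∀ (x : X) (y : Y), ψ (M.innD (M.incl x) y) = M.innB x (τ y) := by
  intro x y
  have hιAinj : Function.Injective M.ιA := M.ιA_isometry.injective
  have hιBinj : Function.Injective M.ιB := M.ιB_isometry.injective
  have hinclinj : Function.Injective M.incl := by
    intro u v h
    have h0 : ‖u - v‖ = 0 := by
      rw [← M.incl_norm, map_sub, h, sub_self, norm_zero]
    exact sub_eq_zero.mp (norm_eq_zero.mp h0)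
  have innC_zero : ∀ z, M.innC 0 z = 0 := by
    intro z
    have h := M.innC_add_left 0 0 z
    rw [add_zero] at h
    exact (right_eq_add.mp h).symm ▸ rfl
  have innC_neg : ∀ y z, M.innC (-y) z = -M.innC y z := by
    intro y z
    have h := M.innC_add_left y (-y) z
    rw [add_neg_cancel, innC_zero] at h
    exact (eq_neg_of_add_eq_zero_right h.symm)
  have innA_sub : ∀ u v w, M.innA (u - v) w = M.innA u w - M.innA v w := by
    intro u v w
    apply hιAinj
    rw [M.innA_compat, map_sub, map_sub, M.innA_compat, M.innA_compat,
      sub_eq_add_neg, sub_eq_add_neg, M.innC_add_left, innC_neg]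
  have key : ∀ u v : X, (∀ w, M.innA u w = M.innA v w) → u = v := by
    intro u v h
    have h0 : M.innA (u - v) (u - v) = 0 := by rw [innA_sub, h, sub_self]
    have hn : ‖u - v‖ ^ 2 = 0 := by
      rw [← M.incl_norm, ← M.innC_norm, ← M.innA_compat, h0, map_zero, norm_zero]
    have h1 : ‖u - v‖ = 0 := pow_eq_zero_iff (two_ne_zero) |>.mp hn
    exact sub_eq_zero.mp (norm_eq_zero.mp h1)
  have hA : ∀ (a : A) (y : Y), τ (M.lC (M.ιA a) y) = M.lA a (τ y) := by
    intro a y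
    apply key
    intro w
    rw [hτ, M.innC_lC, (hφ a _).1, ← hτ]
    apply hιAinj
    rw [map_mul, M.innA_compat, M.innA_compat, M.lA_compat, M.innC_lC]
  have hz : ∀ z : X, M.rB z (ψ (M.innD (M.incl x) y)) = M.rB z (M.innB x (τ y)) := by
    intro z
    rw [hψ, ← M.imprimitivity, ← M.innA_compat, hA]
    apply hinclinj
    rw [M.lA_compat, M.rB_compat, M.innB_compat, ← M.imprimitivity, M.innA_compat]
  have hmul : ∀ (z w : X) (b : B), M.innB z (M.rB w b) = M.innB z w * b := by
    intro z w b
    apply hιBinj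
    rw [map_mul, M.innB_compat, M.rB_compat, M.innD_rD, M.innB_compat]
  set r := ψ (M.innD (M.incl x) y) - M.innB x (τ y) with hr
  have T := (ContinuousLinearMap.mul ℂ B).flip r
  have hspan : Submodule.span ℂ {b : B | ∃ x z, M.innB x z = b} ≤
      LinearMap.ker ((ContinuousLinearMap.mul ℂ B).flip r : B →ₗ[ℂ] B) := by
    rw [Submodule.span_le]
    rintro c ⟨z, w, rfl⟩
    have : M.innB z w * r = 0 := by
      rw [hr, mul_sub, ← hmul, ← hmul, hz, sub_self]
    simpa [LinearMap.mem_ker] using this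
  have hclos : (⊤ : Submodule ℂ B) ≤
      LinearMap.ker ((ContinuousLinearMap.mul ℂ B).flip r : B →ₗ[ℂ] B) := by
    rw [← M.innB_full]
    exact Submodule.topologicalClosure_minimal _ hspan
      (ContinuousLinearMap.isClosed_ker _)
  have h1 : (1 : B) * r = 0 := by
    simpa [LinearMap.mem_ker] using hclos (Submodule.mem_top (x := (1 : B)))
  rw [one_mul] at h1
  exact sub_eq_zero.mp h1
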